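/- arXiv:2003.05649 — 4 statements merged into one kernel-verified Lean document; each statement's English description precedes it below -/
import Mathlib

section
/- Let G : ℝ^d → ℝ be L-Lipschitz-smooth. On a probability space, let ℱ be a sub-σ-algebra, let w be an ℱ-measurable random vector, let y be an ℱ-measurable random variable taking values in the positive integers, and let d be a random vector satisfying almost surely ∇G(w)ᵀ E[d | ℱ] ≥ μ ‖∇G(w)‖² and E[‖d‖² | ℱ] ≤ M / y + M_G ‖∇G(w)‖², for constants μ > 0, M ≥ 0, M_G > 0. If 0 < α < μ/(L·M_G), then almost surely E[G(w − α d) − G(w) | ℱ] ≤ −(α μ / 2) ‖∇G(w)‖² + α² L M / (2 y). -/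
open MeasureTheory RealInnerProductSpace

/-- Conditional expectation commutes with continuous linear maps. -/
theorem condexp_clm' {Ω : Type*} (m : MeasurableSpace Ω) {m0 : MeasurableSpace Ω} {μ : Measure Ω}
    {E F : Type*} [NormedAddCommGroup E] [NormedSpace ℝ E] [CompleteSpace E]
    [NormedAddCommGroup F] [NormedSpace ℝ F] [CompleteSpace F]
    (hm : m ≤ m0) [SigmaFinite (μ.trim hm)]
    (T : E →L[ℝ] F) {f : Ω → E} (hf : Integrable f μ) :
    (fun ω => T ((μ[f|m]) ω)) =ᵐ[μ] μ[fun ω => T (f ω)|m] := by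
  refine ae_eq_condExp_of_forall_setIntegral_eq hm (T.integrable_comp hf) ?_ ?_ ?_
  · intro s hs hμs
    exact (T.integrable_comp integrable_condExp).integrableOn
  · intro s hs hμs
    rw [T.integral_comp_comm integrable_condExp.integrableOn,
      T.integral_comp_comm hf.integrableOn, setIntegral_condExp hm hf hs]
  · exact (T.continuous.comp_stronglyMeasurable
      stronglyMeasurable_condExp).aestronglyMeasurable

/-- Descent lemma: quadratic upper bound for Lipschitz-smooth functions. -/
theorem descent_lemma {dim : ℕ} (G : EuclideanSpace ℝ (Fin dim) → ℝ) (L : ℝ) (hL : 0 ≤ L)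
    (hGdiff : ContDiff ℝ 1 G)
    (hGlip : ∀ u v, ‖gradient G u - gradient G v‖ ≤ L * ‖u - v‖)
    (u h : EuclideanSpace ℝ (Fin dim)) :
    G (u + h) ≤ G u + ⟪gradient G u, h⟫ + L / 2 * ‖h‖ ^ 2 := by
  have hdiff : ∀ x, DifferentiableAt ℝ G x := fun x =>
    (hGdiff.differentiable one_ne_zero).differentiableAt
  have key : ∀ t : ℝ, HasDerivAt (fun s : ℝ => G (u + s • h))
      ⟪gradient G (u + t • h), h⟫ t := by
    intro t
    have h1 : HasDerivAt (fun s : ℝ => u + s • h) h t := by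
      simpa using ((hasDerivAt_id t).smul_const h).const_add u
    have h2 := (hasGradientAt_iff_hasFDerivAt.mp (hdiff _).hasGradientAt).comp_hasDerivAt t h1
    have h3 : HasDerivAt (fun s : ℝ => G (u + s • h))
        ((InnerProductSpace.toDual ℝ _ (gradient G (u + t • h))) h) t := h2
    rw [InnerProductSpace.toDual_apply_apply] at h3
    exact h3
  set ψ : ℝ → ℝ := fun t => G (u + t • h) - t * ⟪gradient G u, h⟫
      - L / 2 * ‖h‖ ^ 2 * t ^ 2 with hψ
  have hψd : ∀ t : ℝ, HasDerivAt ψ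
      (⟪gradient G (u + t • h) - gradient G u, h⟫ - L * ‖h‖ ^ 2 * t) t := by
    intro t
    have p2 : HasDerivAt (fun s : ℝ => s * ⟪gradient G u, h⟫) ⟪gradient G u, h⟫ t := by
      simpa using hasDerivAt_mul_const (⟪gradient G u, h⟫)
    have p3 : HasDerivAt (fun s : ℝ => L / 2 * ‖h‖ ^ 2 * s ^ 2)
        (L / 2 * ‖h‖ ^ 2 * (2 * t)) t := by
      simpa [mul_comm, mul_assoc, mul_left_comm] using (hasDerivAt_pow 2 t).const_mul (L / 2 * ‖h‖ ^ 2)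
    have := ((key t).sub p2).sub p3
    have e : ⟪gradient G (u + t • h) - gradient G u, h⟫ - L * ‖h‖ ^ 2 * t
        = ⟪gradient G (u + t • h), h⟫ - ⟪gradient G u, h⟫ - L / 2 * ‖h‖ ^ 2 * (2 * t) := by
      rw [inner_sub_left]
      ring
    rw [e]
    exact this
  have hcont : Continuous ψ := by
    rw [continuous_iff_continuousAt]; exact fun t => (hψd t).continuousAt
  have hanti : AntitoneOn ψ (Set.Icc 0 1) := by
    apply antitoneOn_of_deriv_nonpos (convex_Icc (0:ℝ) 1) hcont.continuousOn
    · intro x hx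
      exact (hψd x).differentiableAt.differentiableWithinAt
    · intro x hx
      rw [interior_Icc] at hx
      rw [(hψd x).deriv]
      have hcs : ⟪gradient G (u + x • h) - gradient G u, h⟫
          ≤ ‖gradient G (u + x • h) - gradient G u‖ * ‖h‖ := real_inner_le_norm _ _
      have hlip : ‖gradient G (u + x • h) - gradient G u‖ ≤ L * (x * ‖h‖) := by
        have := hGlip (u + x • h) u
        simpa [norm_smul, abs_of_nonneg hx.1.le, mul_assoc] using this
      nlinarith [norm_nonneg h, hx.1.le, hx.2.le]
  have h01 : ψ 1 ≤ ψ 0 := hanti (Set.left_mem_Icc.2 zero_le_one)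
    (Set.right_mem_Icc.2 zero_le_one) zero_le_one
  simp only [hψ, one_smul, zero_smul, add_zero, one_pow, one_mul, zero_pow, mul_zero,
    sub_zero, zero_mul] at h01
  linarith

/-- coordinate bound in EuclideanSpace -/
theorem euclid_abs_coord_le {dim : ℕ} (x : EuclideanSpace ℝ (Fin dim)) (i : Fin dim) :
    |x i| ≤ ‖x‖ := by
  rw [← Real.sqrt_sq_eq_abs, EuclideanSpace.norm_eq]
  apply Real.sqrt_le_sqrt
  have := Finset.single_le_sum (f := fun j => ‖x j‖ ^ 2)
    (fun j _ => sq_nonneg _) (Finset.mem_univ i)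
  simpa [Real.norm_eq_abs, sq_abs] using this

theorem integrable_indicator'' {Ω : Type*} {m0 : MeasurableSpace Ω} {μ : MeasureTheory.Measure Ω}
    {q : Ω → ℝ} {A : Set Ω} (h : Integrable q μ) (hA : MeasurableSet[m0] A) :
    Integrable (A.indicator q) μ := h.indicator hA

set_option maxHeartbeats 2000000 in
/-- One-step expected descent inequality for distributed SGD: if `G` is `L`-Lipschitz
smooth, `w`, `y` are `𝒢`-measurable, the update direction `d` satisfies the first and
second conditional moment bounds, and `0 < α < μ/(L M_G)`, then a.s.
`E[G(w - α d) - G(w) | 𝒢] ≤ -(α μ / 2) ‖∇G(w)‖² + α² L M / (2 y)`. -/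
theorem stmt1 {dim : ℕ} {Ω : Type*} {m0 : MeasurableSpace Ω} {μ : Measure Ω}
    [IsProbabilityMeasure μ]
    (𝒢 : MeasurableSpace Ω) (h𝒢 : 𝒢 ≤ m0)
    (G : EuclideanSpace ℝ (Fin dim) → ℝ)
    (L μc M MG α : ℝ)
    (w d : Ω → EuclideanSpace ℝ (Fin dim)) (y : Ω → ℕ)
    (hL : 0 < L) (hμc : 0 < μc) (hM : 0 ≤ M) (hMG : 0 < MG)
    (hα : 0 < α) (hα' : α < μc / (L * MG))
    (hGdiff : ContDiff ℝ 1 G)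
    (hGlip : ∀ u v, ‖gradient G u - gradient G v‖ ≤ L * ‖u - v‖)
    (hw : StronglyMeasurable[𝒢] w)
    (hy : Measurable[𝒢] y) (hypos : ∀ ω, 0 < y ω)
    (hd : Integrable d μ)
    (hd2 : Integrable (fun ω => ‖d ω‖ ^ 2) μ)
    (hG1 : Integrable (fun ω => G (w ω - α • d ω)) μ)
    (hG2 : Integrable (fun ω => G (w ω)) μ)
    (hmom1 : ∀ᵐ ω ∂μ,
      ⟪gradient G (w ω), (μ[d | 𝒢]) ω⟫ ≥ μc * ‖gradient G (w ω)‖ ^ 2)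
    (hmom2 : ∀ᵐ ω ∂μ, (μ[fun ω' => ‖d ω'‖ ^ 2 | 𝒢]) ω
      ≤ M / (y ω : ℝ) + MG * ‖gradient G (w ω)‖ ^ 2) :
    ∀ᵐ ω ∂μ, (μ[fun ω' => G (w ω' - α • d ω') - G (w ω') | 𝒢]) ω
      ≤ -(α * μc / 2) * ‖gradient G (w ω)‖ ^ 2 + α ^ 2 * L * M / (2 * (y ω : ℝ)) := by
  haveI : SigmaFinite (μ.trim h𝒢) := inferInstance
  set g : Ω → EuclideanSpace ℝ (Fin dim) := fun ω => gradient G (w ω) with hgdef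
  set f : Ω → ℝ := fun ω' => G (w ω' - α • d ω') - G (w ω') with hfdef
  set q : Ω → ℝ := fun ω' => ‖d ω'‖ ^ 2 with hqdef
  have hf_int : Integrable f μ := hG1.sub hG2
  have hgradcont : Continuous (gradient G) := by
    have hl : LipschitzWith (Real.toNNReal L) (gradient G) :=
      LipschitzWith.of_dist_le_mul fun u v => by
        simpa [dist_eq_norm, Real.coe_toNNReal L hL.le] using hGlip u v
    exact hl.continuous
  have hgmeas : StronglyMeasurable[𝒢] g := hgradcont.comp_stronglyMeasurable hw
  have hαLMG : α * (L * MG) < μc := (lt_div_iff₀ (by positivity)).mp hα'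
  -- pointwise descent inequality
  have hpt : ∀ ω, f ω ≤ -α * ⟪g ω, d ω⟫ + α ^ 2 * L / 2 * ‖d ω‖ ^ 2 := by
    intro ω
    have hdl := descent_lemma G L hL.le hGdiff hGlip (w ω) ((-α) • d ω)
    have h1 : w ω + (-α) • d ω = w ω - α • d ω := by
      rw [neg_smul, ← sub_eq_add_neg]
    rw [h1, real_inner_smul_right, norm_smul] at hdl
    simp only [Real.norm_eq_abs, abs_neg, abs_of_nonneg hα.le] at hdl
    simp only [hfdef, hgdef]
    nlinarith [hdl]
  -- coordinates of d
  have hdi : ∀ i, Integrable (fun ω => d ω i) μ := by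
    intro i
    have := (EuclideanSpace.proj (𝕜 := ℝ) i).integrable_comp hd
    simpa using this
  have hco : ∀ i : Fin dim, (fun ω => (μ[d|𝒢]) ω i) =ᵐ[μ] μ[fun ω => d ω i|𝒢] := by
    intro i
    have := condexp_clm' 𝒢 h𝒢 (EuclideanSpace.proj (𝕜 := ℝ) i) hd
    simpa using this
  have main : ∀ n : ℕ, ∀ᵐ ω ∂μ, ‖g ω‖ ≤ (n : ℝ) →
      (μ[f|𝒢]) ω ≤ -(α * μc / 2) * ‖g ω‖ ^ 2 + α ^ 2 * L * M / (2 * (y ω : ℝ)) := by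
    intro n
    set A : Set Ω := {ω | ‖g ω‖ ≤ (n : ℝ)} with hAdef
    have hAm : MeasurableSet[𝒢] A := measurableSet_le hgmeas.measurable.norm measurable_const
    have hAm0 : MeasurableSet[m0] A := h𝒢 _ hAm
    set F : Fin dim → Ω → ℝ := fun i => A.indicator (fun ω => g ω i) with hFdef
    have hFmeas : ∀ i, StronglyMeasurable[𝒢] (F i) := by
      intro i
      have : StronglyMeasurable[𝒢] (fun ω => g ω i) := by
        have := (EuclideanSpace.proj (𝕜 := ℝ) i).continuous.comp_stronglyMeasurable hgmeas
        simpa using this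
      exact this.indicator hAm
    have hFbd : ∀ i ω, ‖F i ω‖ ≤ (n : ℝ) := by
      intro i ω
      by_cases hω : ω ∈ A
      · rw [hFdef]
        simp only [Set.indicator_of_mem hω, Real.norm_eq_abs]
        exact (euclid_abs_coord_le (g ω) i).trans hω
      · rw [hFdef]
        simp [Set.indicator_of_notMem hω]
    have hFd_int : ∀ i, Integrable (fun ω => F i ω * d ω i) μ := fun i =>
      (hdi i).bdd_mul ((hFmeas i).mono h𝒢).aestronglyMeasurable (c := n) (ae_of_all _ (hFbd i))
    have hprod : ∀ i, μ[fun ω => F i ω * d ω i|𝒢] =ᵐ[μ] fun ω => F i ω * (μ[d|𝒢]) ω i := by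
      intro i
      have hfe : (fun ω => F i ω * d ω i) = F i * (fun ω => d ω i) := rfl
      rw [hfe]
      have h1 : μ[F i * (fun ω => d ω i)|𝒢] =ᵐ[μ] F i * μ[fun ω => d ω i|𝒢] :=
        condExp_mul_of_stronglyMeasurable_left (hFmeas i) (hfe ▸ hFd_int i) (hdi i)
      filter_upwards [h1, hco i] with ω h1ω h2ω
      rw [h1ω, Pi.mul_apply, ← h2ω]
    set S : Ω → ℝ := fun ω => A.indicator (fun ω' => ⟪g ω', d ω'⟫) ω with hSdef
    have hSeq : S = fun ω => ∑ i, F i ω * d ω i := by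
      funext ω
      by_cases hω : ω ∈ A
      · simp only [hSdef, hFdef, Set.indicator_of_mem hω, PiLp.inner_apply,
          RCLike.inner_apply, conj_trivial]
        exact Finset.sum_congr rfl fun _ _ => mul_comm _ _
      · simp [hSdef, hFdef, Set.indicator_of_notMem hω]
    have hS_int : Integrable S μ := by
      rw [hSeq]; exact integrable_finset_sum _ fun i _ => hFd_int i
    have hScond : μ[S|𝒢] =ᵐ[μ] fun ω => A.indicator (fun ω' => ⟪g ω', (μ[d|𝒢]) ω'⟫) ω := by
      have hfe : (fun ω => ∑ i, F i ω * d ω i)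
          = ∑ i : Fin dim, fun ω => F i ω * d ω i := by
        funext ω; simp [Finset.sum_apply]
      have hsum : μ[fun ω => ∑ i, F i ω * d ω i|𝒢]
          =ᵐ[μ] ∑ i, μ[fun ω => F i ω * d ω i|𝒢] := by
        rw [hfe]
        exact condExp_finset_sum (fun i _ => hFd_int i) 𝒢
      have hall := ae_all_iff.2 fun i : Fin dim => hprod i
      rw [hSeq]
      filter_upwards [hsum, hall] with ω h1ω h2ω
      rw [h1ω, Finset.sum_apply]
      by_cases hω : ω ∈ A
      · simp only [Set.indicator_of_mem hω, PiLp.inner_apply, RCLike.inner_apply, conj_trivial]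
        refine Finset.sum_congr rfl fun i _ => ?_
        rw [h2ω i]
        simp [hFdef, Set.indicator_of_mem hω, mul_comm]
      · simp only [Set.indicator_of_notMem hω]
        refine Finset.sum_eq_zero fun i _ => ?_
        rw [h2ω i]
        simp [hFdef, Set.indicator_of_notMem hω]
    set P : Ω → ℝ := fun ω => (-α) * S ω + α ^ 2 * L / 2 * A.indicator q ω with hPdef
    have hq_ind_int : Integrable (A.indicator q) μ := integrable_indicator'' hd2 hAm0
    have hP_int : Integrable P μ := (hS_int.const_mul (-α)).add (hq_ind_int.const_mul _)
    have hle : A.indicator f ≤ᵐ[μ] P := by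
      filter_upwards with ω
      by_cases hω : ω ∈ A
      · simp only [hPdef, hSdef, Set.indicator_of_mem hω]
        have := hpt ω
        simp only [hqdef]
        nlinarith [this]
      · simp [hPdef, hSdef, Set.indicator_of_notMem hω]
    have hmono : μ[A.indicator f|𝒢] ≤ᵐ[μ] μ[P|𝒢] :=
      condExp_mono (integrable_indicator'' hf_int hAm0) hP_int hle
    have e0 : μ[A.indicator f|𝒢] =ᵐ[μ] A.indicator (μ[f|𝒢]) := condExp_indicator hf_int hAm
    have e1 : μ[P|𝒢] =ᵐ[μ] μ[fun ω => (-α) * S ω|𝒢] + μ[fun ω => α ^ 2 * L / 2 * A.indicator q ω|𝒢] :=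
      condExp_add (hS_int.const_mul (-α)) (hq_ind_int.const_mul _) 𝒢
    have e2 : μ[fun ω => (-α) * S ω|𝒢] =ᵐ[μ] fun ω => (-α) * (μ[S|𝒢]) ω := by
      have hfe : (fun ω => (-α) * S ω) = (-α) • S := rfl
      rw [hfe]
      filter_upwards [condExp_smul (μ := μ) (m := 𝒢) (-α) S] with ω hω
      rw [hω, Pi.smul_apply, smul_eq_mul]
    have e3 : μ[fun ω => α ^ 2 * L / 2 * A.indicator q ω|𝒢]
        =ᵐ[μ] fun ω => α ^ 2 * L / 2 * (μ[A.indicator q|𝒢]) ω := by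
      have hfe : (fun ω => α ^ 2 * L / 2 * A.indicator q ω)
          = (α ^ 2 * L / 2) • A.indicator q := rfl
      rw [hfe]
      filter_upwards [condExp_smul (μ := μ) (m := 𝒢) (α ^ 2 * L / 2) (A.indicator q)] with ω hω
      rw [hω, Pi.smul_apply, smul_eq_mul]
    have e4 : μ[A.indicator q|𝒢] =ᵐ[μ] A.indicator (μ[q|𝒢]) := condExp_indicator hd2 hAm
    filter_upwards [hmono, e0, e1, e2, e3, e4, hScond, hmom1, hmom2] with ω
      h_mono h_e0 h_e1 h_e2 h_e3 h_e4 h_S h_m1 h_m2 hωA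
    have hωA' : ω ∈ A := hωA
    have hY : (0 : ℝ) < (y ω : ℝ) := by exact_mod_cast hypos ω
    have key : (μ[f|𝒢]) ω ≤ (-α) * ⟪g ω, (μ[d|𝒢]) ω⟫ + α ^ 2 * L / 2 * (μ[q|𝒢]) ω := by
      have lhs_eq : (μ[f|𝒢]) ω = (μ[A.indicator f|𝒢]) ω := by
        rw [h_e0, Set.indicator_of_mem hωA']
      have rhs_eq : (μ[P|𝒢]) ω
          = (-α) * ⟪g ω, (μ[d|𝒢]) ω⟫ + α ^ 2 * L / 2 * (μ[q|𝒢]) ω := by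
        rw [h_e1, Pi.add_apply, h_e2, h_e3, h_S, h_e4,
          Set.indicator_of_mem hωA', Set.indicator_of_mem hωA']
      rw [lhs_eq, ← rhs_eq]
      exact h_mono
    have h1 : μc * ‖g ω‖ ^ 2 ≤ ⟪g ω, (μ[d|𝒢]) ω⟫ := h_m1
    have h2 : (μ[q|𝒢]) ω ≤ M / (y ω : ℝ) + MG * ‖g ω‖ ^ 2 := h_m2
    have hMy : α ^ 2 * L / 2 * (M / (y ω : ℝ)) = α ^ 2 * L * M / (2 * (y ω : ℝ)) := by
      field_simp
    have hN : (0:ℝ) ≤ ‖g ω‖ ^ 2 := sq_nonneg _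
    have h3 : α ^ 2 * L * MG ≤ α * μc := by nlinarith [hαLMG.le, hα.le]
    have hs1 : α * (μc * ‖g ω‖ ^ 2) ≤ α * ⟪g ω, (μ[d|𝒢]) ω⟫ :=
      mul_le_mul_of_nonneg_left h1 hα.le
    have hs2 : α ^ 2 * L / 2 * ((μ[q|𝒢]) ω)
        ≤ α ^ 2 * L / 2 * (M / (y ω : ℝ) + MG * ‖g ω‖ ^ 2) :=
      mul_le_mul_of_nonneg_left h2 (by positivity)
    have h4 := mul_le_mul_of_nonneg_right h3 hN
    linarith [key, hs1, hs2, h4, hMy]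
  have hall := ae_all_iff.2 main
  filter_upwards [hall] with ω hω
  obtain ⟨n, hn⟩ := exists_nat_ge ‖g ω‖
  exact hω n hn
end

section
/- Fix an integer n ≥ 1. For q ∈ (0,1), let y_q be a Binomial(n, 1−q) random variable (each of n workers is independently preempted with probability q, and y_q counts the active workers). Then the map q ↦ E[1/(y_q + 1)] = Σ_{k=0}^{n} (1/(k+1)) · C(n,k) · (1−q)^k · q^{n−k} is strictly increasing on (0,1). -/
/-- For `n ≥ 1` workers each independently preempted with probability `q`, the map
`q ↦ E[1/(y_q + 1)] = ∑_{k=0}^n (1/(k+1)) C(n,k) (1-q)^k q^(n-k)` is strictly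
increasing on `(0,1)`. -/
theorem stmt4 (n : ℕ) (hn : 1 ≤ n) :
    StrictMonoOn (fun q : ℝ =>
      ∑ k ∈ Finset.range (n + 1),
        (1 / (k + 1 : ℝ)) * (n.choose k : ℝ) * (1 - q) ^ k * q ^ (n - k))
      (Set.Ioo 0 1) := by
  have hn1 : ((n : ℝ) + 1) ≠ 0 := by positivity
  have key : ∀ q : ℝ, q ≠ 1 →
      (∑ k ∈ Finset.range (n + 1),
        (1 / (k + 1 : ℝ)) * (n.choose k : ℝ) * (1 - q) ^ k * q ^ (n - k)) =
      (∑ j ∈ Finset.range (n + 1), q ^ j) / (n + 1) := by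
    intro q hq
    have h1 : (1 : ℝ) - q ≠ 0 := sub_ne_zero.mpr (Ne.symm hq)
    have hcoef : ∀ k : ℕ, (1 / (k + 1 : ℝ)) * (n.choose k : ℝ)
        = ((n + 1).choose (k + 1) : ℝ) / (n + 1) := by
      intro k
      have h := Nat.add_one_mul_choose_eq n k
      have h' : ((n : ℝ) + 1) * (n.choose k : ℝ)
          = ((n + 1).choose (k + 1) : ℝ) * ((k : ℝ) + 1) := by
        exact_mod_cast congrArg (Nat.cast (R := ℝ)) h
      have hk1 : ((k : ℝ) + 1) ≠ 0 := by positivity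
      field_simp
      linarith [h']
    -- rewrite the sum with the new coefficients
    have hsum : (∑ k ∈ Finset.range (n + 1),
        (1 / (k + 1 : ℝ)) * (n.choose k : ℝ) * (1 - q) ^ k * q ^ (n - k)) =
        (∑ k ∈ Finset.range (n + 1),
          ((n + 1).choose (k + 1) : ℝ) * (1 - q) ^ k * q ^ (n - k)) / (n + 1) := by
      rw [Finset.sum_div]
      refine Finset.sum_congr rfl fun k _ => ?_
      rw [hcoef k]; ring
    rw [hsum]
    congr 1
    -- show T = geometric sum, by multiplying by (1-q)
    have hT : (1 - q) * (∑ k ∈ Finset.range (n + 1),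
        ((n + 1).choose (k + 1) : ℝ) * (1 - q) ^ k * q ^ (n - k)) = 1 - q ^ (n + 1) := by
      have hb := add_pow (1 - q) q (n + 1)
      have hbin : (∑ k ∈ Finset.range (n + 2),
          (1 - q) ^ k * q ^ (n + 1 - k) * ((n + 1).choose k : ℝ)) = 1 := by
        simpa using hb.symm
      have hsplit : (∑ k ∈ Finset.range (n + 2),
          (1 - q) ^ k * q ^ (n + 1 - k) * ((n + 1).choose k : ℝ)) =
          (∑ k ∈ Finset.range (n + 1),
            (1 - q) ^ (k + 1) * q ^ (n - k) * ((n + 1).choose (k + 1) : ℝ)) + q ^ (n + 1) := by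
        rw [Finset.sum_range_succ']
        simp
      rw [Finset.mul_sum]
      have : ∀ k ∈ Finset.range (n + 1),
          (1 - q) * (((n + 1).choose (k + 1) : ℝ) * (1 - q) ^ k * q ^ (n - k)) =
          (1 - q) ^ (k + 1) * q ^ (n - k) * ((n + 1).choose (k + 1) : ℝ) := by
        intro k _; ring
      rw [Finset.sum_congr rfl this]
      have := hsplit.symm.trans hbin
      linarith
    have hG : (1 - q) * (∑ j ∈ Finset.range (n + 1), q ^ j) = 1 - q ^ (n + 1) := by
      have := geom_sum_mul q (n + 1)
      nlinarith [this]
    have := hT.trans hG.symm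
    exact mul_left_cancel₀ h1 this
  -- strict monotonicity of the geometric-sum form
  intro a ha b hb hab
  have ha0 : (0 : ℝ) < a := ha.1
  have hb0 : (0 : ℝ) < b := hb.1
  simp only
  rw [key a (ne_of_lt ha.2), key b (ne_of_lt hb.2)]
  have hlt : (∑ j ∈ Finset.range (n + 1), a ^ j) < ∑ j ∈ Finset.range (n + 1), b ^ j := by
    apply Finset.sum_lt_sum
    · intro i _
      exact pow_le_pow_left₀ ha0.le hab.le i
    · refine ⟨1, Finset.mem_range.mpr (by omega), ?_⟩
      simpa using hab
  exact div_lt_div_of_pos_right hlt (by positivity)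
end

section
/- Let p̲ < p̄ be reals and let F : [p̲, p̄] → [0,1] be a continuous, strictly increasing function with F(p̲) = 0 and F(p̄) = 1, given by F(x) = ∫_{p̲}^{x} f(t) dt for a nonnegative integrable density f. Let r > 0, let J ≥ 1 and n ≥ 1 be integers, and let θ > 0 satisfy J r / θ ≤ 1. For b ∈ (p̲, p̄], define the expected completion time τ(b) = J r / F(b) and the expected cost C(b) = (J n r / F(b)) · ∫_{p̲}^{b} p · f(p) dp. Then b* := F^{-1}(J r / θ) satisfies τ(b*) ≤ θ, and C(b*) ≤ C(b) for every b ∈ (p̲, p̄] with τ(b) ≤ θ. That is, the optimal uniform bid price is b* = F^{-1}(J r / θ). -/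
open MeasureTheory intervalIntegral

/-- Optimal uniform bid (Theorem 2): with CDF `F` of the spot price on `[p̲, p̄]`,
expected per-iteration runtime `r`, `J` iterations, `n` workers and deadline `θ`,
the bid `b* = F⁻¹(Jr/θ)` meets the deadline `τ(b*) = Jr/F(b*) ≤ θ` and minimizes the
expected cost `C(b) = (Jnr/F(b)) ∫_{p̲}^b p f(p) dp` among deadline-feasible bids. -/
theorem stmt11 (pl pu : ℝ) (hpp : pl < pu)
    (f F : ℝ → ℝ)
    (hf : ∀ x ∈ Set.Icc pl pu, 0 ≤ f x)
    (hfi : IntegrableOn f (Set.Icc pl pu))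
    (hF : ∀ x, F x = ∫ t in pl..x, f t)
    (hFc : ContinuousOn F (Set.Icc pl pu))
    (hFm : StrictMonoOn F (Set.Icc pl pu))
    (hF0 : F pl = 0) (hF1 : F pu = 1)
    (r : ℝ) (hr : 0 < r) (J n : ℕ) (hJ : 1 ≤ J) (hn : 1 ≤ n)
    (θ : ℝ) (hθ : 0 < θ) (hfeas : (J : ℝ) * r / θ ≤ 1)
    (bstar : ℝ) (hbstar : bstar ∈ Set.Ioc pl pu)
    (hbF : F bstar = (J : ℝ) * r / θ) :
    (J : ℝ) * r / F bstar ≤ θ ∧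
    ∀ b ∈ Set.Ioc pl pu, (J : ℝ) * r / F b ≤ θ →
      ((J : ℝ) * n * r / F bstar) * ∫ p in pl..bstar, p * f p
        ≤ ((J : ℝ) * n * r / F b) * ∫ p in pl..b, p * f p := by

  have hJr : (0:ℝ) < (J:ℝ) * r := by
    have : (1:ℝ) ≤ (J:ℝ) := by exact_mod_cast hJ
    nlinarith
  have hFbstar : 0 < F bstar := by rw [hbF]; positivity
  have hmemstar : bstar ∈ Set.Icc pl pu := ⟨hbstar.1.le, hbstar.2⟩
  have hmempl : pl ∈ Set.Icc pl pu := ⟨le_rfl, hpp.le⟩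
  -- interval integrable lemmas
  have hint : ∀ x y : ℝ, pl ≤ x → x ≤ y → y ≤ pu →
      IntervalIntegrable (fun p => p * f p) volume x y := by
    intro x y hx hxy hy
    have h1 : IntegrableOn f (Set.Icc x y) := hfi.mono_set (Set.Icc_subset_Icc hx hy)
    have h2 : IntegrableOn (fun p => p * f p) (Set.Icc x y) :=
      h1.continuousOn_mul continuousOn_id isCompact_Icc
    exact (intervalIntegrable_iff_integrableOn_Icc_of_le hxy).2 h2
  have hintf : ∀ x y : ℝ, pl ≤ x → x ≤ y → y ≤ pu →
      IntervalIntegrable f volume x y := by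
    intro x y hx hxy hy
    exact (intervalIntegrable_iff_integrableOn_Icc_of_le hxy).2
      (hfi.mono_set (Set.Icc_subset_Icc hx hy))
  constructor
  · rw [hbF, div_div_eq_mul_div, mul_comm, mul_div_assoc, div_self hJr.ne', mul_one]
  · intro b hb hτ
    have hmemb : b ∈ Set.Icc pl pu := ⟨hb.1.le, hb.2⟩
    have hFb : 0 < F b := by
      have := hFm hmempl hmemb hb.1
      rw [hF0] at this; exact this
    have hFle : F bstar ≤ F b := by
      rw [hbF]
      rw [div_le_iff₀ hFb] at hτ
      rw [div_le_iff₀ hθ]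
      nlinarith
    have hble : bstar ≤ b := by
      by_contra h
      push_neg at h
      exact absurd (hFm hmemb hmemstar h) (not_lt.2 hFle)
    set A := ∫ p in pl..bstar, p * f p with hA
    set B := ∫ p in bstar..b, p * f p with hB
    have hAB : A + B = ∫ p in pl..b, p * f p :=
      integral_add_adjacent_intervals (hint pl bstar le_rfl hbstar.1.le hbstar.2)
        (hint bstar b hbstar.1.le hble hb.2)
    have hAle : A ≤ bstar * F bstar := by
      have : bstar * F bstar = ∫ p in pl..bstar, bstar * f p := by
        rw [hF bstar, intervalIntegral.integral_const_mul]
      rw [this]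
      apply intervalIntegral.integral_mono_on hbstar.1.le
        (hint pl bstar le_rfl hbstar.1.le hbstar.2)
        ((hintf pl bstar le_rfl hbstar.1.le hbstar.2).const_mul bstar)
      intro x hx
      exact mul_le_mul_of_nonneg_right hx.2
        (hf x ⟨hx.1, hx.2.trans hbstar.2⟩)
    have hFdiff : F b - F bstar = ∫ p in bstar..b, f p := by
      rw [hF b, hF bstar]
      rw [← intervalIntegral.integral_interval_sub_left
        (hintf pl b le_rfl (hbstar.1.le.trans hble) hb.2)
        (hintf pl bstar le_rfl hbstar.1.le hbstar.2)]
    have hBge : bstar * (F b - F bstar) ≤ B := by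
      have : bstar * (F b - F bstar) = ∫ p in bstar..b, bstar * f p := by
        rw [hFdiff, intervalIntegral.integral_const_mul]
      rw [this]
      apply intervalIntegral.integral_mono_on hble
        ((hintf bstar b hbstar.1.le hble hb.2).const_mul bstar)
        (hint bstar b hbstar.1.le hble hb.2)
      intro x hx
      exact mul_le_mul_of_nonneg_right hx.1
        (hf x ⟨hbstar.1.le.trans hx.1, hx.2.trans hb.2⟩)
    have key : A * F b ≤ (A + B) * F bstar := by
      nlinarith [mul_le_mul_of_nonneg_right hAle (sub_nonneg.2 hFle),
        mul_le_mul_of_nonneg_right hBge hFbstar.le]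
    have hcnn : (0:ℝ) ≤ (J:ℝ) * n * r := by positivity
    rw [← hAB, div_mul_eq_mul_div, div_mul_eq_mul_div,
      div_le_div_iff₀ hFbstar hFb]
    nlinarith [mul_le_mul_of_nonneg_left key hcnn]
end

section
/- Let β ∈ (0,1), A, B, n₀ > 0, χ > 0 and η > 1 with η^χ > 1/β, and set x = 1/(β·η^χ) ∈ (0,1). Define the static error bound S(J) = A·β^J + (B/n₀^χ)·(1 − β^J)/(1 − β) for J ∈ ℕ, and the dynamic error bound D(J') = A·β^{J'} + (B/n₀^χ)·β^{J'−1}·(1 − x^{J'})/(1 − x) for J' ∈ ℕ. Then there exists J₀ such that for all integers J ≥ J₀, setting J'(J) = ⌈ log(1 + (η−1)·J) / (χ·log η) ⌉, one has D(J'(J)) ≤ S(J). That is, provisioning n₀·η^{j−1} workers in iteration j and running only ⌈log_{η^χ}(1 + (η−1)J)⌉ iterations achieves an error bound no larger than provisioning n₀ workers for J iterations, for all sufficiently large J. -/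
/-- Theorem 5 (dynamic workers): with static error bound
`S(J) = A β^J + (B/n₀^χ)(1-β^J)/(1-β)` and dynamic error bound
`D(J') = A β^J' + (B/n₀^χ) β^(J'-1) (1-x^J')/(1-x)`, `x = 1/(β η^χ) ∈ (0,1)`,
for all sufficiently large `J`, running `J'(J) = ⌈log(1+(η-1)J)/(χ log η)⌉` iterations
with geometrically growing workers gives `D(J'(J)) ≤ S(J)`. -/
theorem stmt17 (β A B n₀ χ η : ℝ)
    (hβ : β ∈ Set.Ioo (0 : ℝ) 1) (hA : 0 < A) (hB : 0 < B) (hn₀ : 0 < n₀)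
    (hχ : 0 < χ) (hη : 1 < η) (hηβ : η ^ χ > 1 / β)
    (x : ℝ) (hx : x = 1 / (β * η ^ χ))
    (S D : ℕ → ℝ)
    (hS : ∀ J : ℕ, S J = A * β ^ J + (B / n₀ ^ χ) * (1 - β ^ J) / (1 - β))
    (hD : ∀ J' : ℕ, D J' = A * β ^ J'
      + (B / n₀ ^ χ) * β ^ (J' - 1) * (1 - x ^ J') / (1 - x)) :
    ∃ J₀ : ℕ, ∀ J : ℕ, J₀ ≤ J →
      D ⌈Real.log (1 + (η - 1) * J) / (χ * Real.log η)⌉₊ ≤ S J := by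
  obtain ⟨hβ0, hβ1⟩ := hβ
  have hηχ : (0:ℝ) < η ^ χ := Real.rpow_pos_of_pos (by linarith) χ
  have hβη : 1 < β * η ^ χ := by
    rw [gt_iff_lt, div_lt_iff₀ hβ0] at hηβ
    nlinarith
  have hx0 : 0 < x := by rw [hx]; positivity
  have hx1 : x < 1 := by rw [hx, div_lt_one (by linarith)]; linarith
  set c := B / n₀ ^ χ with hc
  have hc0 : 0 < c := div_pos hB (Real.rpow_pos_of_pos hn₀ χ)
  set M := A + c / (β * (1 - x)) with hM
  have hM0 : 0 < M := by
    have : 0 < 1 - x := by linarith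
    positivity
  -- choose N with M * β^N ≤ c
  obtain ⟨N, hN⟩ : ∃ N : ℕ, M * β ^ N ≤ c := by
    have htend : Filter.Tendsto (fun n : ℕ => M * β ^ n) Filter.atTop (nhds (M * 0)) :=
      (tendsto_pow_atTop_nhds_zero_of_lt_one hβ0.le hβ1).const_mul M
    rw [mul_zero] at htend
    have := htend.eventually_le_const hc0
    exact this.exists
  have hlogη : 0 < Real.log η := Real.log_pos hη
  have hχlog : 0 < χ * Real.log η := by positivity
  refine ⟨⌈(Real.exp (N * (χ * Real.log η)) - 1) / (η - 1)⌉₊ + 1, fun J hJ => ?_⟩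
  set f := Real.log (1 + (η - 1) * J) / (χ * Real.log η) with hf
  set J' := ⌈f⌉₊ with hJ'
  -- step 1: N ≤ J'
  have hJR : (⌈(Real.exp (N * (χ * Real.log η)) - 1) / (η - 1)⌉₊ : ℝ) ≤ J := by
    exact_mod_cast Nat.le_of_succ_le hJ
  have hceil := Nat.le_ceil ((Real.exp (N * (χ * Real.log η)) - 1) / (η - 1))
  have hdiv : (Real.exp (N * (χ * Real.log η)) - 1) / (η - 1) ≤ J := le_trans hceil hJR
  have hexp : Real.exp (N * (χ * Real.log η)) ≤ 1 + (η - 1) * J := by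
    rw [div_le_iff₀ (by linarith)] at hdiv
    linarith [hdiv]
  have harg : (0:ℝ) < 1 + (η - 1) * J :=
    lt_of_lt_of_le (Real.exp_pos _) hexp
  have hlog : (N:ℝ) * (χ * Real.log η) ≤ Real.log (1 + (η - 1) * J) := by
    calc (N:ℝ) * (χ * Real.log η) = Real.log (Real.exp (N * (χ * Real.log η))) :=
          (Real.log_exp _).symm
      _ ≤ Real.log (1 + (η - 1) * J) := Real.log_le_log (Real.exp_pos _) hexp
  have hNf : (N:ℝ) ≤ f := by
    rw [hf, le_div_iff₀ hχlog]
    exact hlog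
  have hNJ' : N ≤ J' := by
    have := le_trans hNf (Nat.le_ceil f)
    exact_mod_cast this
  -- step 2: D J' ≤ M * β^J'
  have hβpow : β ^ (J' - 1) ≤ β ^ J' / β := by
    rw [le_div_iff₀ hβ0, ← pow_succ]
    exact pow_le_pow_of_le_one hβ0.le hβ1.le (by omega)
  have hxpow : 0 < x ^ J' := pow_pos hx0 J'
  have hxpow1 : x ^ J' ≤ 1 := pow_le_one₀ hx0.le hx1.le
  have h1x : 0 < 1 - x := by linarith
  have hDle : D J' ≤ M * β ^ J' := by
    rw [hD, hM]
    have hβJ : 0 < β ^ J' := pow_pos hβ0 J'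
    have key : c * β ^ (J' - 1) * (1 - x ^ J') / (1 - x)
        ≤ c / (β * (1 - x)) * β ^ J' := by
      have keq : c * (β ^ J' / β) * 1 / (1 - x) = c / (β * (1 - x)) * β ^ J' := by
        field_simp
      rw [← keq]
      gcongr
      all_goals first | exact hβpow | linarith
    linarith [key]
  -- step 3: M * β^J' ≤ c
  have hstep3 : M * β ^ J' ≤ c := by
    have : β ^ J' ≤ β ^ N := pow_le_pow_of_le_one hβ0.le hβ1.le hNJ'
    calc M * β ^ J' ≤ M * β ^ N := mul_le_mul_of_nonneg_left this hM0.le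
      _ ≤ c := hN
  -- step 4: c ≤ S J
  have hJ1 : 1 ≤ J := le_trans (Nat.le_add_left 1 _) hJ
  have hβJ : β ^ J ≤ β := by
    calc β ^ J ≤ β ^ 1 := pow_le_pow_of_le_one hβ0.le hβ1.le hJ1
      _ = β := pow_one β
  have hcS : c ≤ S J := by
    rw [hS]
    have h1 : 0 ≤ A * β ^ J := by positivity
    have h2 : c ≤ c * (1 - β ^ J) / (1 - β) := by
      rw [le_div_iff₀ (by linarith : (0:ℝ) < 1 - β)]
      have := mul_le_mul_of_nonneg_left hβJ hc0.le
      linarith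
    linarith
  exact le_trans hDle (le_trans hstep3 hcS)
end
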